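/- Let Γ act minimally and equicontinuously on a Cantor space 𝔛. Then for every x ∈ 𝔛 and every clopen set W containing x, there exists a clopen set U adapted to the action with x ∈ U ⊆ W. In particular, the adapted sets containing x form a neighborhood basis at x. -/

import Mathlib

open Pointwise

theorem stmt4 {X : Type*} [MetricSpace X] [CompactSpace X]
    [TotallyDisconnectedSpace X] (hperf : Perfect (Set.univ : Set X))
    {G : Type*} [Group G] [MulAction G X]
    (hc : ∀ g : G, Continuous fun x : X => g • x)
    (hmin : ∀ x : X, Dense (MulAction.orbit G x))
    (hequi : ∀ ε > (0 : ℝ), ∃ δ > (0 : ℝ), ∀ x y : X, dist x y < δ →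
        ∀ g : G, dist (g • x) (g • y) < ε) :
    ∀ (x : X) (W : Set X), IsClopen W → x ∈ W →
      ∃ U : Set X, U.Nonempty ∧ IsClopen U ∧ x ∈ U ∧ U ⊆ W ∧
        ∀ g : G, ((g • U) ∩ U).Nonempty → g • U = U := by
  intro x W hW hxW
  -- separate W from Wᶜ
  obtain ⟨ε, hε, hsep⟩ : ∃ ε > (0 : ℝ), ∀ y ∈ W, ∀ z ∈ Wᶜ, ε ≤ dist y z := by
    obtain ⟨r, hr, h⟩ := EMetric.exists_pos_forall_lt_edist (hW.isClosed.isCompact)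
      hW.isOpen.isClosed_compl disjoint_compl_right
    refine ⟨r, by exact_mod_cast hr, fun y hy z hz => ?_⟩
    have := h y hy z hz
    rw [edist_dist] at this
    have := (ENNReal.lt_ofReal_iff_toReal_lt (by simp)).mp this
    simpa using this.le
  -- the step relation
  set step : X → X → Prop := fun y z => ∀ g : G, dist (g • y) (g • z) < ε with hstep
  have step_symm : Symmetric step := fun y z h g => by rw [dist_comm]; exact h g
  have step_inv : ∀ (g : G) {y z}, step y z → step (g • y) (g • z) := by
    intro g y z h h'
    have := h (h' * g)
    simpa [mul_smul] using this
  set U : Set X := {y | Relation.ReflTransGen step x y} with hU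
  have RTG_symm : Symmetric (Relation.ReflTransGen step) := fun a b h =>
    (@Relation.ReflTransGen.stdSymm _ step ⟨fun a b h => step_symm h⟩).symm a b h
  -- invariance of chains
  have chain_inv : ∀ (g : G) {a b : X}, Relation.ReflTransGen step a b →
      Relation.ReflTransGen step (g • a) (g • b) :=
    fun g a b h => Relation.ReflTransGen.lift (fun y => g • y) (fun _ _ hr => step_inv g hr) _ _ h
  have chain_inv_iff : ∀ (g : G) (a b : X), Relation.ReflTransGen step a b ↔
      Relation.ReflTransGen step (g • a) (g • b) := by
    intro g a b
    refine ⟨chain_inv g, fun h => ?_⟩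
    have := chain_inv g⁻¹ h
    simpa using this
  have hxU : x ∈ U := Relation.ReflTransGen.refl
  -- U ⊆ W
  have hUW : U ⊆ W := by
    intro y hy
    induction hy with
    | refl => exact hxW
    | tail _ hstep ih =>
      rename_i b c _
      by_contra hcW
      have h1 : dist ((1 : G) • b) ((1 : G) • c) < ε := hstep 1
      simp only [one_smul] at h1
      exact absurd (hsep b ih c hcW) (not_le.mpr h1)
  -- U is open and closed
  obtain ⟨δ, hδ, hδe⟩ := hequi ε hε
  have hUopen : IsOpen U := by
    rw [Metric.isOpen_iff]
    intro y hy
    exact ⟨δ, hδ, fun z hz => hy.tail (fun g => hδe y z (Metric.mem_ball'.mp hz) g)⟩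
  have hUclosed : IsClosed U := by
    rw [← isOpen_compl_iff, Metric.isOpen_iff]
    intro y hy
    refine ⟨δ, hδ, fun z hz hzU => hy ?_⟩
    exact hzU.tail (fun g => hδe z y (Metric.mem_ball.mp hz) g)
  -- adaptedness
  refine ⟨U, ⟨x, hxU⟩, ⟨hUclosed, hUopen⟩, hxU, hUW, ?_⟩
  intro g ⟨y, hy1, hy2⟩
  obtain ⟨z, hz, rfl⟩ := hy1
  -- hz : z ∈ U, hy2 : g • z ∈ U
  have key : Relation.ReflTransGen step (g • x) x := by
    exact (chain_inv g hz).trans (RTG_symm hy2)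
  ext w
  constructor
  · rintro ⟨v, hv, rfl⟩
    exact (RTG_symm key).trans (chain_inv g hv)
  · intro hw
    refine ⟨g⁻¹ • w, ?_, by simp⟩
    have : Relation.ReflTransGen step (g⁻¹ • (g • x)) (g⁻¹ • w) := chain_inv g⁻¹ (key.trans hw)
    simpa [hU] using this
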